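/- Let 0 < q < 1, let μ be a finite discrete measure on S^{n-1} not concentrated on any closed hemisphere, let h ∈ C⁺(S^{n-1}) with Aleksandrov body [h]_μ containing the origin in its interior, and suppose the optimal translation point ξ_h = o (i.e. ξ = 0 maximizes ξ ↦ ∫ (h(u) − ξ·u)^q dμ(u) over [h]_μ). Then the first-order optimality condition ∫_{S^{n-1}} h(u)^{q−1} u dμ(u) = 0 holds. -/

import Mathlib

open scoped RealInnerProductSpace

/-- First-order optimality: if `ξ = 0` lies in the interior of the Aleksandrov body
`[h]_μ` and maximizes `ξ ↦ Σ_k α_k (h(u_k) − ξ·u_k)^q` over `[h]_μ`, then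
`Σ_k α_k h(u_k)^{q−1} u_k = 0`. -/
theorem stmt14 {n N : ℕ} (q : ℝ) (hq0 : 0 < q) (hq1 : q < 1)
    (α : Fin N → ℝ) (hα : ∀ k, 0 < α k)
    (u : Fin N → EuclideanSpace ℝ (Fin n)) (hu : ∀ k, ‖u k‖ = 1)
    (hhemi : ∀ w : EuclideanSpace ℝ (Fin n), ‖w‖ = 1 → ∃ k, 0 < ⟪w, u k⟫)
    (h : EuclideanSpace ℝ (Fin n) → ℝ) (hh : Continuous h) (hhpos : ∀ k, 0 < h (u k))
    (A : Set (EuclideanSpace ℝ (Fin n)))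
    (hA : A = {x : EuclideanSpace ℝ (Fin n) | ∀ k, ⟪x, u k⟫ ≤ h (u k)})
    (h0int : (0 : EuclideanSpace ℝ (Fin n)) ∈ interior A)
    (hmax : IsMaxOn (fun ξ : EuclideanSpace ℝ (Fin n) =>
      ∑ k, α k * (h (u k) - ⟪ξ, u k⟫) ^ q) A 0) :
    ∑ k, (α k * h (u k) ^ (q - 1)) • u k = 0 := by
  have hmem : A ∈ nhds (0 : EuclideanSpace ℝ (Fin n)) := mem_interior_iff_mem_nhds.mp h0int
  have hloc : IsLocalMax (fun ξ : EuclideanSpace ℝ (Fin n) =>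
      ∑ k, α k * (h (u k) - ⟪ξ, u k⟫) ^ q) 0 := hmax.isLocalMax hmem
  set L : EuclideanSpace ℝ (Fin n) →L[ℝ] ℝ :=
    ∑ k, α k • ((q * h (u k) ^ (q - 1)) • (-(innerSL ℝ (u k)))) with hLdef
  have hder : HasFDerivAt (fun ξ : EuclideanSpace ℝ (Fin n) =>
      ∑ k, α k * (h (u k) - ⟪ξ, u k⟫) ^ q) L 0 := by
    rw [hLdef]
    apply HasFDerivAt.fun_sum
    intro k _
    have hg : HasFDerivAt (fun ξ : EuclideanSpace ℝ (Fin n) => h (u k) - ⟪ξ, u k⟫) (-(innerSL ℝ (u k))) 0 := by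
      have hfun : (fun ξ : EuclideanSpace ℝ (Fin n) => h (u k) - ⟪ξ, u k⟫)
          = fun ξ => h (u k) - ⟪u k, ξ⟫ := by
        funext ξ; rw [real_inner_comm]
      rw [hfun]
      simpa using (hasFDerivAt_const (h (u k)) (0 : EuclideanSpace ℝ (Fin n))).fun_sub
        (innerSL ℝ (u k)).hasFDerivAt
    have hr : HasDerivAt (fun x : ℝ => x ^ q) (q * (h (u k) - ⟪(0:EuclideanSpace ℝ (Fin n)), u k⟫) ^ (q - 1))
        (h (u k) - ⟪(0:EuclideanSpace ℝ (Fin n)), u k⟫) :=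
      Real.hasDerivAt_rpow_const (Or.inl (by simpa using (hhpos k).ne'))
    have := (hr.comp_hasFDerivAt 0 hg).const_mul (α k)
    simpa using this
  have hL0 : L = 0 := hloc.hasFDerivAt_eq_zero hder
  set v : EuclideanSpace ℝ (Fin n) := ∑ k, (α k * h (u k) ^ (q - 1)) • u k with hv
  have hLv : L v = 0 := by rw [hL0]; rfl
  have hsum : (∑ k, α k * (q * h (u k) ^ (q - 1)) * ⟪u k, v⟫) = 0 := by
    have := hLv
    rw [hLdef] at this
    simp only [ContinuousLinearMap.sum_apply, ContinuousLinearMap.smul_apply,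
      ContinuousLinearMap.neg_apply, innerSL_apply_apply, smul_eq_mul] at this
    have h2 : (∑ k, -(α k * (q * h (u k) ^ (q - 1)) * ⟪u k, v⟫)) = 0 := by
      rw [← this]; congr 1; ext k; ring
    simpa [Finset.sum_neg_distrib, neg_eq_zero] using h2
  have hvv : ⟪v, v⟫ = 0 := by
    have : (∑ k, α k * (q * h (u k) ^ (q - 1)) * ⟪u k, v⟫)
        = q * ⟪v, v⟫ := by
      rw [hv, sum_inner, Finset.mul_sum]
      congr 1; ext k
      rw [real_inner_smul_left]
      ring
    rw [this] at hsum
    exact (mul_eq_zero.mp hsum).resolve_left hq0.ne' 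
  exact inner_self_eq_zero.mp hvv
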